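/- Let K, N_Y ∈ ℕ and c : Fin K → ℝ with c_i ≥ 0 for all i, and set Λ_Y = ∑_i c_i. On S = {x : Fin K → ℕ | ∑_i x_i ≤ N_Y} define π(x) = (N_Y!/(1+Λ_Y)^{N_Y})·(1/(N_Y − ∑_i x_i)!)·∏_i c_i^{x_i}/x_i!. Then (i) ∑_{x ∈ S} π(x) = 1, and (ii) for every n ≤ N_Y, ∑_{x ∈ S, ∑_i x_i = N_Y − n} π(x) = C(N_Y, n)·Λ_Y^{N_Y − n}/(1 + Λ_Y)^{N_Y}; i.e. under π the number of free RNA-polymerases F_Y = N_Y − ∑_i x_i has the binomial distribution B(N_Y, 1/(1+Λ_Y)). -/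

import Mathlib

open Finset

private lemma rnap_multinomial_sum (K m : ℕ) (c : Fin K → ℝ) :
    ∑ x ∈ Finset.piAntidiag (Finset.univ : Finset (Fin K)) m,
      ∏ i, c i ^ (x i) / (Nat.factorial (x i) : ℝ)
      = (∑ i, c i) ^ m / (Nat.factorial m : ℝ) := by
  rw [eq_div_iff (by exact_mod_cast (Nat.factorial_pos m).ne')]
  rw [Finset.sum_pow_eq_sum_piAntidiag, Finset.sum_mul]
  refine Finset.sum_congr rfl fun x hx => ?_
  simp only [Finset.mem_piAntidiag] at hx
  have hspec := Nat.multinomial_spec Finset.univ x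
  rw [hx.1] at hspec
  have : (Nat.factorial m : ℝ) = (∏ i, (Nat.factorial (x i) : ℝ)) * (Nat.multinomial Finset.univ x : ℝ) := by
    rw [← hspec]; push_cast; rfl
  rw [this, Finset.prod_div_distrib]
  have hne : (∏ i, (Nat.factorial (x i) : ℝ)) ≠ 0 := by
    refine Finset.prod_ne_zero_iff.2 fun i _ => ?_
    exact_mod_cast (Nat.factorial_pos (x i)).ne'
  field_simp

private lemma rnap_fiber_eq (K NY m : ℕ) (hm : m ≤ NY)
    (S : Finset (Fin K → ℕ))
    (hS : S = (Finset.Iic (fun _ => NY)).filter (fun x => (∑ i, x i) ≤ NY)) :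
    S.filter (fun x => (∑ i, x i) = m)
      = Finset.piAntidiag (Finset.univ : Finset (Fin K)) m := by
  subst hS
  ext x
  simp only [Finset.mem_filter, Finset.mem_piAntidiag, Finset.mem_Iic, Finset.mem_univ,
    ne_eq, implies_true, and_true]
  constructor
  · rintro ⟨_, h⟩; exact h
  · intro h
    refine ⟨⟨fun i => ?_, h ▸ hm⟩, h⟩
    calc x i ≤ ∑ j, x j := Finset.single_le_sum (f := x) (fun j _ => Nat.zero_le _) (Finset.mem_univ i)
    _ = m := h
    _ ≤ NY := hm

theorem rnap_free_polymerases_binomial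
    (K NY : ℕ) (c : Fin K → ℝ) (hc : ∀ i, 0 ≤ c i)
    (ΛY : ℝ) (hΛ : ΛY = ∑ i, c i)
    (S : Finset (Fin K → ℕ))
    (hS : S = (Finset.Iic (fun _ => NY)).filter (fun x => (∑ i, x i) ≤ NY))
    (π : (Fin K → ℕ) → ℝ)
    (hπ : ∀ x, π x = (Nat.factorial NY : ℝ) / (1 + ΛY) ^ NY
      * (1 / (Nat.factorial (NY - ∑ i, x i) : ℝ))
      * ∏ i, c i ^ (x i) / (Nat.factorial (x i) : ℝ)) :
    (∑ x ∈ S, π x) = 1 ∧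
    ∀ n : ℕ, n ≤ NY →
      (∑ x ∈ S.filter (fun x => (∑ i, x i) = NY - n), π x)
        = (Nat.choose NY n : ℝ) * ΛY ^ (NY - n) / (1 + ΛY) ^ NY := by
  have hΛ0 : 0 ≤ ΛY := hΛ ▸ Finset.sum_nonneg fun i _ => hc i
  have h1Λ : (0:ℝ) < 1 + ΛY := by linarith
  have h1Λpow : ((1 + ΛY) ^ NY) ≠ 0 := by positivity
  -- fiber sums
  have hfiber : ∀ m : ℕ, m ≤ NY →
      (∑ x ∈ S.filter (fun x => (∑ i, x i) = m), π x)
        = (Nat.choose NY m : ℝ) * ΛY ^ m / (1 + ΛY) ^ NY := by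
    intro m hm
    rw [rnap_fiber_eq K NY m hm S hS]
    have : ∀ x ∈ Finset.piAntidiag (Finset.univ : Finset (Fin K)) m,
        π x = (Nat.factorial NY : ℝ) / (1 + ΛY) ^ NY
          * (1 / (Nat.factorial (NY - m) : ℝ))
          * ∏ i, c i ^ (x i) / (Nat.factorial (x i) : ℝ) := by
      intro x hx
      simp only [Finset.mem_piAntidiag] at hx
      rw [hπ, hx.1]
    rw [Finset.sum_congr rfl this, ← Finset.mul_sum, rnap_multinomial_sum, ← hΛ]
    have hcast : (Nat.choose NY m : ℝ) = (Nat.factorial NY : ℝ) /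
        ((Nat.factorial m : ℝ) * (Nat.factorial (NY - m) : ℝ)) := by
      rw [eq_div_iff (by positivity)]
      have := Nat.choose_mul_factorial_mul_factorial hm
      push_cast [← this]
      ring
    rw [hcast]
    have hm0 : (Nat.factorial m : ℝ) ≠ 0 := by positivity
    have hnm0 : (Nat.factorial (NY - m) : ℝ) ≠ 0 := by positivity
    field_simp
  constructor
  · have hmaps : ∀ x ∈ S, (∑ i, x i) ∈ Finset.range (NY + 1) := by
      intro x hx
      rw [hS, Finset.mem_filter] at hx
      exact Finset.mem_range.2 (Nat.lt_succ_of_le hx.2)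
    rw [← Finset.sum_fiberwise_of_maps_to hmaps π]
    have : ∀ m ∈ Finset.range (NY + 1),
        (∑ x ∈ S.filter (fun x => (∑ i, x i) = m), π x)
          = (Nat.choose NY m : ℝ) * ΛY ^ m / (1 + ΛY) ^ NY := fun m hm =>
      hfiber m (Nat.lt_succ_iff.1 (Finset.mem_range.1 hm))
    rw [Finset.sum_congr rfl this]
    have := add_pow ΛY 1 NY
    simp only [one_pow, mul_one] at this
    rw [← Finset.sum_div, div_eq_one_iff_eq h1Λpow]
    rw [add_comm ΛY 1] at this
    rw [this]
    exact Finset.sum_congr rfl fun i _ => mul_comm _ _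
  · intro n hn
    rw [hfiber (NY - n) (Nat.sub_le _ _), Nat.choose_symm hn]
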